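/- Let r ≥ 3 and let a₁,…,a_r, b₁,…,b_r ∈ ℝ², and consider the lines ℓ_{a_i,b_i} in ℝ³ for i = 1,…,r. If all the lines ℓ_{a_1,b_1},…,ℓ_{a_r,b_r} pass through a common point of ℝ³ and also lie in a common plane of ℝ³, then the points a₁,…,a_r lie on a common line of ℝ², the points b₁,…,b_r lie on a common line of ℝ², and there exists an isometry T of ℝ² with T(a_i) = b_i for every i = 1,…,r. -/

import Mathlib

/-- Points of the plane `ℝ²` with the Euclidean norm. -/
abbrev Pt := EuclideanSpace ℝ (Fin 2)

/-- Counterclockwise rotation of a vector of `ℝ²` by `π/2`: `(x, y)^⊥ = (-y, x)`. -/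
noncomputable def perp (v : Pt) : Pt := WithLp.toLp 2 ![-(v 1), v 0]

/-- The line `ℓ_{a,b} = { ((a+b)/2 + t·((a−b)/2)^⊥, t) : t ∈ ℝ }` in `ℝ³ = ℝ² × ℝ`. -/
noncomputable def lineOf (a b : Pt) : Set (Pt × ℝ) :=
  {x | ∃ t : ℝ, x = ((2⁻¹ : ℝ) • (a + b) + t • perp ((2⁻¹ : ℝ) • (a - b)), t)}

/-- The direction vector `(((a−b)/2)^⊥, 1)` of the line `ℓ_{a,b}`. -/
noncomputable def dirOf (a b : Pt) : Pt × ℝ := (perp ((2⁻¹ : ℝ) • (a - b)), 1)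

/-- `T : ℝ² → ℝ²` is an isometry of the plane (a distance-preserving bijection of
`ℝ²`, hence affine with norm-preserving linear part). -/
def IsPlaneIsometry (T : Pt → Pt) : Prop :=
  ∃ (A : Pt →ₗ[ℝ] Pt) (w : Pt),
    (∀ x : Pt, ‖A x‖ = ‖x‖) ∧ ∀ x : Pt, T x = A x + w

/- ### Auxiliary lemmas -/

lemma pt_ext {x y : Pt} (h0 : x 0 = y 0) (h1 : x 1 = y 1) : x = y := by
  apply PiLp.ext; intro i; fin_cases i <;> assumption

lemma perp_inj {x y : Pt} (h : perp x = perp y) : x = y := by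
  have h0 : -(x 1) = -(y 1) := congrArg (fun z : Pt => z 0) h
  have h1 : x 0 = y 0 := congrArg (fun z : Pt => z 1) h
  exact pt_ext h1 (neg_injective h0)

lemma perp_add_smul (x y : Pt) (c : ℝ) : perp (x + c • y) = perp x + c • perp y := by
  refine pt_ext ?_ ?_ <;>
    simp [perp, PiLp.add_apply, PiLp.smul_apply, smul_eq_mul] <;> ring

lemma perp_zero : perp 0 = 0 := by
  refine pt_ext ?_ ?_ <;> simp [perp]

lemma norm_sq_pt (x : Pt) : ‖x‖^2 = x 0^2 + x 1^2 := by
  rw [EuclideanSpace.norm_eq, Real.sq_sqrt (by positivity)]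
  simp [Fin.sum_univ_two, sq_abs]

lemma norm_eq_of_sq (x y : Pt) (h : x 0^2 + x 1^2 = y 0^2 + y 1^2) : ‖x‖ = ‖y‖ := by
  rw [← Real.sqrt_sq (norm_nonneg x), ← Real.sqrt_sq (norm_nonneg y), norm_sq_pt, norm_sq_pt, h]

lemma exists_rotation (u v : Pt) (huv : ‖u‖ = ‖v‖) (hu : u ≠ 0) :
    ∃ A : Pt →ₗ[ℝ] Pt, (∀ x, ‖A x‖ = ‖x‖) ∧ A u = v := by
  have hsq : u 0^2 + u 1^2 = v 0^2 + v 1^2 := by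
    rw [← norm_sq_pt, ← norm_sq_pt, huv]
  have hn : u 0 ^ 2 + u 1 ^ 2 ≠ 0 := by
    intro h
    apply hu
    have h0 : u 0 = 0 := by nlinarith [sq_nonneg (u 0), sq_nonneg (u 1)]
    have h1 : u 1 = 0 := by nlinarith [sq_nonneg (u 0), sq_nonneg (u 1)]
    refine pt_ext ?_ ?_ <;> simp [h0, h1]
  set n := u 0 ^ 2 + u 1 ^ 2 with hn_def
  set c := (u 0 * v 0 + u 1 * v 1) / n with hc
  set s := (u 0 * v 1 - u 1 * v 0) / n with hs
  have hcs : c ^ 2 + s ^ 2 = 1 := by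
    rw [hc, hs, div_pow, div_pow, ← add_div]
    rw [div_eq_one_iff_eq (by positivity)]
    rw [hn_def] at hsq ⊢
    nlinarith [hsq]
  refine ⟨{ toFun := fun x => WithLp.toLp 2 ![c * x 0 - s * x 1, s * x 0 + c * x 1],
            map_add' := ?_, map_smul' := ?_ }, ?_, ?_⟩
  · intro x y
    refine pt_ext ?_ ?_ <;>
      simp [PiLp.add_apply, Matrix.cons_val_zero, Matrix.cons_val_one, Matrix.head_cons] <;> ring
  · intro mm x
    refine pt_ext ?_ ?_ <;>
      simp [PiLp.smul_apply, Matrix.cons_val_zero, Matrix.cons_val_one, Matrix.head_cons,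
        smul_eq_mul] <;> ring
  · intro x
    refine norm_eq_of_sq _ _ ?_
    show (c * x 0 - s * x 1)^2 + (s * x 0 + c * x 1)^2 = _
    nlinarith [hcs]
  · refine pt_ext ?_ ?_
    · show c * u 0 - s * u 1 = v 0
      rw [hc, hs]; field_simp; ring
    · show s * u 0 + c * u 1 = v 1
      rw [hc, hs]; field_simp; ring

lemma final_lemma {r : ℕ} (a b : Fin r → Pt) (a1 b1 u v : Pt) (hu : u ≠ 0)
    (huv : ‖u‖ = ‖v‖) (β : Fin r → ℝ)
    (ha : ∀ i, a i = a1 + β i • u) (hb : ∀ i, b i = b1 + β i • v) :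
    (∃ La : AffineSubspace ℝ Pt, Module.finrank ℝ La.direction = 1 ∧
      ∀ i : Fin r, a i ∈ La) ∧
    (∃ Lb : AffineSubspace ℝ Pt, Module.finrank ℝ Lb.direction = 1 ∧
      ∀ i : Fin r, b i ∈ Lb) ∧
    ∃ T : Pt → Pt, IsPlaneIsometry T ∧ ∀ i : Fin r, T (a i) = b i := by
  have hv : v ≠ 0 := by
    intro h
    apply hu
    rw [← norm_eq_zero] at h ⊢
    rw [huv, h]
  obtain ⟨A, hA, hAu⟩ := exists_rotation u v huv hu
  refine ⟨⟨AffineSubspace.mk' a1 (ℝ ∙ u), ?_, ?_⟩,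
          ⟨AffineSubspace.mk' b1 (ℝ ∙ v), ?_, ?_⟩,
          ⟨fun x => A x + (b1 - A a1), ⟨A, b1 - A a1, hA, fun _ => rfl⟩, ?_⟩⟩
  · rw [AffineSubspace.direction_mk']
    exact finrank_span_singleton hu
  · intro i
    rw [AffineSubspace.mem_mk']
    refine Submodule.mem_span_singleton.2 ⟨β i, ?_⟩
    show β i • u = a i - a1
    rw [ha i]; abel
  · rw [AffineSubspace.direction_mk']
    exact finrank_span_singleton hv
  · intro i
    rw [AffineSubspace.mem_mk']
    refine Submodule.mem_span_singleton.2 ⟨β i, ?_⟩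
    show β i • v = b i - b1
    rw [hb i]; abel
  · intro i
    rw [ha i, hb i]
    show A (a1 + β i • u) + (b1 - A a1) = b1 + β i • v
    rw [map_add, map_smul, hAu]
    abel

/-- **Lemma 2.1(c).** If `r ≥ 3` and the lines `ℓ_{a_i, b_i}`, `i = 1, …, r`, all
pass through a common point of `ℝ³` and also all lie in a common plane of `ℝ³`,
then the points `a_1, …, a_r` lie on a common line of `ℝ²`, the points
`b_1, …, b_r` lie on a common line of `ℝ²`, and there is an isometry `T` of `ℝ²`
with `T(a_i) = b_i` for all `i`. -/
theorem concurrent_and_coplanar_lines_collinear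
    (r : ℕ) (hr : 3 ≤ r) (a b : Fin r → Pt)
    (hconc : ∃ x : Pt × ℝ, ∀ i : Fin r, x ∈ lineOf (a i) (b i))
    (hplane : ∃ P : AffineSubspace ℝ (Pt × ℝ), Module.finrank ℝ P.direction = 2 ∧
      ∀ i : Fin r, lineOf (a i) (b i) ⊆ (P : Set (Pt × ℝ))) :
    (∃ La : AffineSubspace ℝ Pt, Module.finrank ℝ La.direction = 1 ∧
      ∀ i : Fin r, a i ∈ La) ∧
    (∃ Lb : AffineSubspace ℝ Pt, Module.finrank ℝ Lb.direction = 1 ∧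
      ∀ i : Fin r, b i ∈ Lb) ∧
    ∃ T : Pt → Pt, IsPlaneIsometry T ∧ ∀ i : Fin r, T (a i) = b i := by
  classical
  have hrpos : 0 < r := by omega
  obtain ⟨x₀, hx⟩ := hconc
  obtain ⟨P, hdim, hsub⟩ := hplane
  set q : Fin r → Pt := fun i => (2⁻¹:ℝ) • (a i - b i) with hqdef
  set m : Fin r → Pt := fun i => (2⁻¹:ℝ) • (a i + b i) with hmdef
  set p : Fin r → Pt := fun i => perp (q i) with hpdef
  set t₀ : ℝ := x₀.2 with ht₀
  set i0 : Fin r := ⟨0, hrpos⟩ with hi0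
  have hχ : ∀ i, x₀.1 = m i + t₀ • p i := by
    intro i
    obtain ⟨t, ht⟩ := hx i
    have h2 : x₀.2 = t := congrArg Prod.snd ht
    have h1 : x₀.1 = m i + t • p i := congrArg Prod.fst ht
    rw [ht₀, h2]; exact h1
  have haq : ∀ i, a i = m i + q i := by
    intro i
    show a i = (2⁻¹:ℝ) • (a i + b i) + (2⁻¹:ℝ) • (a i - b i)
    module
  have hbq : ∀ i, b i = m i - q i := by
    intro i
    show b i = (2⁻¹:ℝ) • (a i + b i) - (2⁻¹:ℝ) • (a i - b i)
    module
  have hmem0 : ∀ i, ((m i, (0:ℝ)) : Pt × ℝ) ∈ P := by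
    intro i
    apply hsub i
    exact ⟨0, by simp [hmdef, smul_add]⟩
  have hmem1 : ∀ i, ((m i + p i, (1:ℝ)) : Pt × ℝ) ∈ P := by
    intro i
    apply hsub i
    exact ⟨1, by simp [hmdef, hpdef, hqdef, smul_add]⟩
  have hdir : ∀ i, ((p i, (1:ℝ)) : Pt × ℝ) ∈ P.direction := by
    intro i
    have h := AffineSubspace.vsub_mem_direction (hmem1 i) (hmem0 i)
    have he : ((m i + p i, (1:ℝ)) : Pt × ℝ) -ᵥ ((m i, (0:ℝ)) : Pt × ℝ) = (p i, 1) := by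
      show ((m i + p i, (1:ℝ)) : Pt × ℝ) - (m i, 0) = (p i, 1)
      ext <;> simp
    rwa [he] at h
  by_cases hdeg : ∀ i, p i = p i0
  · -- degenerate case: all lines coincide
    have hq0 : ∀ i, q i = q i0 := fun i => perp_inj (hdeg i)
    have hm0 : ∀ i, m i = m i0 := by
      intro i
      have h := (hχ i).symm.trans (hχ i0)
      rw [hdeg i] at h
      exact add_right_cancel h
    have ha0 : ∀ i, a i = a i0 := by
      intro i; rw [haq i, haq i0, hq0 i, hm0 i]
    have hb0 : ∀ i, b i = b i0 := by
      intro i; rw [hbq i, hbq i0, hq0 i, hm0 i]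
    have hone : (WithLp.toLp 2 ![1,0] : Pt) ≠ 0 := by
      intro h
      have h0 : (1:ℝ) = 0 := by simpa using congrArg (fun z : Pt => z 0) h
      exact one_ne_zero h0
    exact final_lemma a b (a i0) (b i0) (WithLp.toLp 2 ![1,0]) (WithLp.toLp 2 ![1,0]) hone rfl (fun _ => 0)
      (fun i => by rw [ha0 i]; simp) (fun i => by rw [hb0 i]; simp)
  · -- nondegenerate case
    push_neg at hdeg
    obtain ⟨j, hj⟩ := hdeg
    have hd : p j - p i0 ≠ 0 := sub_ne_zero.2 hj
    set d : Pt := p j - p i0 with hddef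
    set f : Fin 2 → Pt × ℝ := ![((p i0, (1:ℝ)) : Pt × ℝ), (d, 0)] with hfdef
    have hle : Submodule.span ℝ (Set.range f) ≤ P.direction := by
      rw [Submodule.span_le]
      rintro x ⟨i, rfl⟩
      fin_cases i
      · exact hdir i0
      · have h := Submodule.sub_mem P.direction (hdir j) (hdir i0)
        have he : ((p j, (1:ℝ)) : Pt × ℝ) - (p i0, 1) = (d, 0) := by
          ext <;> simp [hddef]
        rw [he] at h
        simpa [hfdef] using h
    have hind : LinearIndependent ℝ f := by
      rw [hfdef, LinearIndependent.pair_iff]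
      intro s t hst
      have h2 : s * 1 + t * 0 = 0 := congrArg Prod.snd hst
      have hs0 : s = 0 := by simpa using h2
      subst hs0
      have h1 : (0:ℝ) • p i0 + t • d = 0 := congrArg Prod.fst hst
      rw [zero_smul, zero_add] at h1
      refine ⟨rfl, ?_⟩
      rcases smul_eq_zero.1 h1 with h | h
      · exact h
      · exact absurd h hd
    have hSV : Submodule.span ℝ (Set.range f) = P.direction := by
      apply Submodule.eq_of_le_of_finrank_le hle
      rw [hdim, finrank_span_eq_card hind]
      simp
    have hck : ∀ k, ∃ ck : Fin 2 → ℝ, p k = p i0 + ck 1 • d := by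
      intro k
      have h := hdir k
      rw [← hSV, Submodule.mem_span_range_iff_exists_fun] at h
      obtain ⟨ck, hcc⟩ := h
      rw [Fin.sum_univ_two] at hcc
      have h2 : ck 0 * 1 + ck 1 * 0 = 1 := congrArg Prod.snd hcc
      have hc0 : ck 0 = 1 := by simpa using h2
      have h1 : ck 0 • p i0 + ck 1 • d = p k := congrArg Prod.fst hcc
      rw [hc0, one_smul] at h1
      exact ⟨ck, h1.symm⟩
    choose c hpk using hck
    set e : Pt := -perp d with hedef
    have hped : perp e = d := by
      refine pt_ext ?_ ?_ <;> simp [hedef, perp]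
    have he0 : e ≠ 0 := by
      intro h
      apply hd
      rw [← hped, h, perp_zero]
    have hqk : ∀ k, q k = q i0 + c k 1 • e := by
      intro k
      apply perp_inj
      rw [perp_add_smul, hped]
      exact hpk k
    have hmk : ∀ k, m k = (x₀.1 - t₀ • p i0) - (c k 1 * t₀) • d := by
      intro k
      have h := hχ k
      rw [hpk k] at h
      have h' : m k = x₀.1 - t₀ • (p i0 + c k 1 • d) := eq_sub_of_add_eq h.symm
      rw [h']; module
    have hak : ∀ k, a k = (x₀.1 - t₀ • p i0 + q i0) + c k 1 • (e - t₀ • perp e) := by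
      intro k
      rw [haq k, hmk k, hqk k, hped]
      module
    have hbk : ∀ k, b k = (x₀.1 - t₀ • p i0 - q i0) + c k 1 • (-e - t₀ • perp e) := by
      intro k
      rw [hbq k, hmk k, hqk k, hped]
      module
    have hu0 : e - t₀ • perp e ≠ 0 := by
      intro h
      apply he0
      have h0 : e 0 - t₀ * (-(e 1)) = 0 := congrArg (fun z : Pt => z 0) h
      have h1 : e 1 - t₀ * e 0 = 0 := congrArg (fun z : Pt => z 1) h
      have he00 : e 0 * (1 + t₀^2) = 0 := by linear_combination h0 - t₀ * h1
      have ht : (1 + t₀^2) ≠ 0 := by positivity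
      have he0' : e 0 = 0 := by
        rcases mul_eq_zero.1 he00 with h | h
        · exact h
        · exact absurd h ht
      have he1' : e 1 = 0 := by linarith [h1, he0', mul_eq_zero_of_right t₀ he0']
      refine pt_ext ?_ ?_ <;> simp [he0', he1']
    have huv : ‖e - t₀ • perp e‖ = ‖-e - t₀ • perp e‖ := by
      refine norm_eq_of_sq _ _ ?_
      show (e 0 - t₀ * (-(e 1)))^2 + (e 1 - t₀ * e 0)^2
        = (-(e 0) - t₀ * (-(e 1)))^2 + (-(e 1) - t₀ * e 0)^2
      ring
    exact final_lemma a b _ _ _ _ hu0 huv (fun k => c k 1) hak hbk
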